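/- arXiv:2304.02480 — 2 statements merged into one kernel-verified Lean document; each statement's English description precedes it below -/
import Mathlib

section
/- Let S and A be finite nonempty sets, let d be a probability distribution on S, let β > 0, ε ≥ 0, δ ≥ 0 be real numbers, and let f, f̃ : S × A → ℝ satisfy |f(s,a) − f̃(s,a)| ≤ ε for all (s,a). For each s let π_θ(·|s) and π̃_θ(·|s) be the softmax distributions on A with inverse temperature β and logits f(s,·) and f̃(s,·), and let π_E(·|s) be a probability distribution on A. If Σ_{s∈S} d(s) · D_KL(π_E(·|s) ‖ π̃_θ(·|s)) ≤ δ, then Σ_{s∈S} d(s) · D_TV(π_θ(·|s), π_E(·|s)) ≤ sinh(2βε) + √2 · √δ. -/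
/-- The softmax distribution on a finite set `A` with inverse temperature `β`
and logits `x`. -/
noncomputable def softmax {A : Type*} [Fintype A] (β : ℝ) (x : A → ℝ) (a : A) : ℝ :=
  Real.exp (β * x a) / ∑ a' : A, Real.exp (β * x a')

/-- The total variation distance between two distributions on a finite set. -/
noncomputable def tvDist {A : Type*} [Fintype A] (p q : A → ℝ) : ℝ :=
  (1 / 2) * ∑ a : A, |p a - q a|

/-- The Kullback–Leibler divergence between two distributions on a finite set,
summed over the support of `p`. -/
noncomputable def klDiv {A : Type*} [Fintype A] (p q : A → ℝ) : ℝ :=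
  ∑ a ∈ Finset.univ.filter (fun a : A => 0 < p a), p a * Real.log (p a / q a)

private lemma ptwise (p q : ℝ) (hp : 0 < p) (hq : 0 < q) :
    2 * p - 2 * Real.sqrt p * Real.sqrt q ≤ p * Real.log (p / q) := by
  have h1 : Real.log (Real.sqrt (q / p)) ≤ Real.sqrt (q / p) - 1 :=
    Real.log_le_sub_one_of_pos (Real.sqrt_pos.2 (div_pos hq hp))
  have h2 : Real.log (q / p) = 2 * Real.log (Real.sqrt (q / p)) := by
    rw [Real.log_sqrt (le_of_lt (div_pos hq hp))]; ring
  have h3 : Real.log (p / q) = - Real.log (q / p) := by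
    rw [← Real.log_inv, inv_div]
  have h4 : Real.sqrt (q / p) = Real.sqrt q / Real.sqrt p := by
    rw [Real.sqrt_div hq.le]
  have h5 : 2 - 2 * (Real.sqrt q / Real.sqrt p) ≤ Real.log (p / q) := by
    rw [h3, h2, ← h4]; nlinarith [h1]
  have hsp : (0:ℝ) < Real.sqrt p := Real.sqrt_pos.2 hp
  have hspq : p * (Real.sqrt q / Real.sqrt p) = Real.sqrt p * Real.sqrt q := by
    field_simp
    linear_combination -(Real.mul_self_sqrt hp.le)
  nlinarith [mul_le_mul_of_nonneg_left h5 hp.le]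

private lemma hellinger_le_klDiv {A : Type*} [Fintype A] (p q : A → ℝ)
    (hp0 : ∀ a, 0 ≤ p a) (hp1 : ∑ a : A, p a = 1)
    (hq0 : ∀ a, 0 < q a) (hq1 : ∑ a : A, q a = 1) :
    ∑ a : A, (Real.sqrt (p a) - Real.sqrt (q a)) ^ 2 ≤ klDiv p q := by
  have key : ∀ a : A,
      p a - q a + (Real.sqrt (p a) - Real.sqrt (q a)) ^ 2
        = 2 * p a - 2 * Real.sqrt (p a) * Real.sqrt (q a) := by
    intro a
    have := Real.sq_sqrt (hp0 a)
    have := Real.sq_sqrt (hq0 a).le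
    ring_nf
    nlinarith [Real.sq_sqrt (hp0 a), Real.sq_sqrt (hq0 a).le]
  have hsum : ∑ a : A, (p a - q a + (Real.sqrt (p a) - Real.sqrt (q a)) ^ 2)
      = ∑ a ∈ Finset.univ.filter (fun a : A => 0 < p a),
          (p a - q a + (Real.sqrt (p a) - Real.sqrt (q a)) ^ 2) := by
    refine (Finset.sum_subset (Finset.filter_subset _ _) ?_).symm
    intro a _ ha
    have hpa : p a = 0 := by
      by_contra h
      exact ha (Finset.mem_filter.2 ⟨Finset.mem_univ a, (hp0 a).lt_of_ne' h⟩)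
    rw [hpa]
    rw [Real.sqrt_zero]
    have := Real.sq_sqrt (hq0 a).le
    ring_nf
    nlinarith [Real.sq_sqrt (hq0 a).le]
  have hle : ∑ a ∈ Finset.univ.filter (fun a : A => 0 < p a),
      (p a - q a + (Real.sqrt (p a) - Real.sqrt (q a)) ^ 2) ≤ klDiv p q := by
    refine Finset.sum_le_sum ?_
    intro a ha
    have hpa := (Finset.mem_filter.1 ha).2
    rw [key a]
    exact ptwise _ _ hpa (hq0 a)
  have hsplit : ∑ a : A, (p a - q a + (Real.sqrt (p a) - Real.sqrt (q a)) ^ 2)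
      = ∑ a : A, (Real.sqrt (p a) - Real.sqrt (q a)) ^ 2 := by
    rw [Finset.sum_add_distrib, Finset.sum_sub_distrib, hp1, hq1]
    ring
  rw [← hsplit, hsum]; exact hle

private lemma tv_le_sqrt_klDiv {A : Type*} [Fintype A] (p q : A → ℝ)
    (hp0 : ∀ a, 0 ≤ p a) (hp1 : ∑ a : A, p a = 1)
    (hq0 : ∀ a, 0 < q a) (hq1 : ∑ a : A, q a = 1) :
    tvDist p q ≤ Real.sqrt (klDiv p q) ∧ 0 ≤ klDiv p q := by
  set H2 := ∑ a : A, (Real.sqrt (p a) - Real.sqrt (q a)) ^ 2 with hH2def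
  have hH2 : 0 ≤ H2 := Finset.sum_nonneg fun a _ => sq_nonneg _
  have hHK : H2 ≤ klDiv p q := hellinger_le_klDiv p q hp0 hp1 hq0 hq1
  have hKL : 0 ≤ klDiv p q := le_trans hH2 hHK
  refine ⟨?_, hKL⟩
  -- Cauchy-Schwarz 1 : ∑ √p√q ≤ 1
  have hcs1 : (∑ a : A, Real.sqrt (p a) * Real.sqrt (q a)) ^ 2 ≤ 1 := by
    have := Finset.sum_mul_sq_le_sq_mul_sq Finset.univ
      (fun a => Real.sqrt (p a)) (fun a => Real.sqrt (q a))
    have e1 : ∑ a : A, Real.sqrt (p a) ^ 2 = 1 := by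
      rw [← hp1]; exact Finset.sum_congr rfl fun a _ => Real.sq_sqrt (hp0 a)
    have e2 : ∑ a : A, Real.sqrt (q a) ^ 2 = 1 := by
      rw [← hq1]; exact Finset.sum_congr rfl fun a _ => Real.sq_sqrt (hq0 a).le
    rw [e1, e2] at this; linarith
  have hpq1 : ∑ a : A, Real.sqrt (p a) * Real.sqrt (q a) ≤ 1 := by
    nlinarith [Finset.sum_nonneg (fun a (_ : a ∈ Finset.univ) =>
      mul_nonneg (Real.sqrt_nonneg (p a)) (Real.sqrt_nonneg (q a)))]
  -- ∑ (√p + √q)^2 ≤ 4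
  have hsum4 : ∑ a : A, (Real.sqrt (p a) + Real.sqrt (q a)) ^ 2 ≤ 4 := by
    have : ∑ a : A, (Real.sqrt (p a) + Real.sqrt (q a)) ^ 2
        = ∑ a : A, (p a + q a + 2 * (Real.sqrt (p a) * Real.sqrt (q a))) := by
      refine Finset.sum_congr rfl fun a _ => ?_
      have := Real.sq_sqrt (hp0 a)
      have := Real.sq_sqrt (hq0 a).le
      nlinarith
    rw [this, Finset.sum_add_distrib, Finset.sum_add_distrib, hp1, hq1, ← Finset.mul_sum]
    linarith
  -- Cauchy-Schwarz 2
  have hcs2 : (∑ a : A, |p a - q a|) ^ 2 ≤ H2 * ∑ a : A, (Real.sqrt (p a) + Real.sqrt (q a)) ^ 2 := by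
    have h := Finset.sum_mul_sq_le_sq_mul_sq Finset.univ
      (fun a => |Real.sqrt (p a) - Real.sqrt (q a)|)
      (fun a => Real.sqrt (p a) + Real.sqrt (q a))
    have e : ∀ a : A, |Real.sqrt (p a) - Real.sqrt (q a)| * (Real.sqrt (p a) + Real.sqrt (q a))
        = |p a - q a| := by
      intro a
      have h1 : (0:ℝ) ≤ Real.sqrt (p a) + Real.sqrt (q a) :=
        add_nonneg (Real.sqrt_nonneg _) (Real.sqrt_nonneg _)
      rw [← abs_of_nonneg h1, ← abs_mul]
      congr 1
      have := Real.sq_sqrt (hp0 a)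
      have := Real.sq_sqrt (hq0 a).le
      nlinarith
    calc (∑ a : A, |p a - q a|) ^ 2
        = (∑ a : A, |Real.sqrt (p a) - Real.sqrt (q a)| * (Real.sqrt (p a) + Real.sqrt (q a))) ^ 2 := by
          congr 1; exact (Finset.sum_congr rfl fun a _ => e a).symm
      _ ≤ (∑ a : A, |Real.sqrt (p a) - Real.sqrt (q a)| ^ 2) *
            ∑ a : A, (Real.sqrt (p a) + Real.sqrt (q a)) ^ 2 := h
      _ = H2 * ∑ a : A, (Real.sqrt (p a) + Real.sqrt (q a)) ^ 2 := by
          congr 1; exact Finset.sum_congr rfl fun a _ => by rw [sq_abs]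
  have hfinal : (∑ a : A, |p a - q a|) ^ 2 ≤ 4 * klDiv p q := by
    calc (∑ a : A, |p a - q a|) ^ 2
        ≤ H2 * ∑ a : A, (Real.sqrt (p a) + Real.sqrt (q a)) ^ 2 := hcs2
      _ ≤ H2 * 4 := by
          refine mul_le_mul_of_nonneg_left hsum4 hH2
      _ ≤ 4 * klDiv p q := by linarith
  -- conclude
  have htv0 : 0 ≤ ∑ a : A, |p a - q a| := Finset.sum_nonneg fun a _ => abs_nonneg _
  rw [tvDist]
  rw [show Real.sqrt (klDiv p q) = Real.sqrt (klDiv p q) from rfl]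
  have : (1/2 : ℝ) * ∑ a : A, |p a - q a| ≤ Real.sqrt (klDiv p q) := by
    rw [← Real.sqrt_sq (by positivity : (0:ℝ) ≤ (1/2 : ℝ) * ∑ a : A, |p a - q a|)]
    refine Real.sqrt_le_sqrt ?_
    nlinarith
  exact this

private lemma softmax_pos {A : Type*} [Fintype A] [Nonempty A] (β : ℝ) (x : A → ℝ) (a : A) :
    0 < softmax β x a :=
  div_pos (Real.exp_pos _) (Finset.sum_pos (fun a' _ => Real.exp_pos _) Finset.univ_nonempty)

private lemma softmax_sum_one {A : Type*} [Fintype A] [Nonempty A] (β : ℝ) (x : A → ℝ) :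
    ∑ a : A, softmax β x a = 1 := by
  have h : (0:ℝ) < ∑ a' : A, Real.exp (β * x a') :=
    Finset.sum_pos (fun a' _ => Real.exp_pos _) Finset.univ_nonempty
  simp only [softmax, ← Finset.sum_div]
  exact div_self h.ne'

private lemma tv_softmax_le_sinh {A : Type*} [Fintype A] [Nonempty A] (β ε : ℝ)
    (hβ : 0 < β) (hε : 0 ≤ ε) (x y : A → ℝ) (h : ∀ a, |x a - y a| ≤ ε) :
    tvDist (softmax β x) (softmax β y) ≤ Real.sinh (2 * β * ε) := by
  set C := Real.exp (2 * β * ε) with hCdef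
  have hC1 : (1:ℝ) ≤ C := Real.one_le_exp (by positivity)
  have hZx : (0:ℝ) < ∑ a' : A, Real.exp (β * x a') :=
    Finset.sum_pos (fun a' _ => Real.exp_pos _) Finset.univ_nonempty
  have hZy : (0:ℝ) < ∑ a' : A, Real.exp (β * y a') :=
    Finset.sum_pos (fun a' _ => Real.exp_pos _) Finset.univ_nonempty
  have hab : ∀ a : A, Real.exp (β * x a) ≤ Real.exp (β * ε) * Real.exp (β * y a) := by
    intro a
    rw [← Real.exp_add, Real.exp_le_exp]
    have := (abs_le.1 (h a)).2
    nlinarith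
  have hba : ∀ a : A, Real.exp (β * y a) ≤ Real.exp (β * ε) * Real.exp (β * x a) := by
    intro a
    rw [← Real.exp_add, Real.exp_le_exp]
    have := (abs_le.1 (h a)).1
    nlinarith
  have hZ1 : (∑ a' : A, Real.exp (β * x a')) ≤ Real.exp (β * ε) * ∑ a' : A, Real.exp (β * y a') := by
    rw [Finset.mul_sum]; exact Finset.sum_le_sum fun a _ => hab a
  have hZ2 : (∑ a' : A, Real.exp (β * y a')) ≤ Real.exp (β * ε) * ∑ a' : A, Real.exp (β * x a') := by
    rw [Finset.mul_sum]; exact Finset.sum_le_sum fun a _ => hba a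
  have hCsq : C = Real.exp (β * ε) * Real.exp (β * ε) := by
    rw [hCdef, ← Real.exp_add]; ring_nf
  have hple : ∀ a : A, softmax β x a ≤ C * softmax β y a := by
    intro a
    rw [softmax, softmax, ← mul_div_assoc, div_le_div_iff₀ hZx hZy, hCsq]
    nlinarith [mul_le_mul (hab a) hZ2 hZy.le
      (by positivity : (0:ℝ) ≤ Real.exp (β * ε) * Real.exp (β * y a))]
  have hqle : ∀ a : A, softmax β y a ≤ C * softmax β x a := by
    intro a
    rw [softmax, softmax, ← mul_div_assoc, div_le_div_iff₀ hZy hZx, hCsq]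
    nlinarith [mul_le_mul (hba a) hZ1 hZx.le
      (by positivity : (0:ℝ) ≤ Real.exp (β * ε) * Real.exp (β * x a))]
  have habs : ∀ a : A, |softmax β x a - softmax β y a| ≤ (C - 1) * softmax β y a := by
    intro a
    have hqa : 0 < softmax β y a := softmax_pos β y a
    have hpa : 0 < softmax β x a := softmax_pos β x a
    rw [abs_sub_le_iff]
    constructor
    · nlinarith [hple a]
    · have hC0 : (0:ℝ) < C := Real.exp_pos _
      nlinarith [hqle a, mul_nonneg hqa.le (sq_nonneg (C - 1))]
  have hsum : ∑ a : A, |softmax β x a - softmax β y a| ≤ C - 1 := by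
    have h1 := Finset.sum_le_sum (fun a (_ : a ∈ Finset.univ) => habs a)
    rw [← Finset.mul_sum, softmax_sum_one, mul_one] at h1
    exact h1
  have hexp : Real.exp (-(2 * β * ε)) ≤ 1 := by
    rw [show (1:ℝ) = Real.exp 0 from (Real.exp_zero).symm]
    exact Real.exp_le_exp.2 (neg_nonpos.2 (by positivity))
  rw [tvDist, Real.sinh_eq]
  nlinarith [hsum, hexp]

/-- If the true softmax policy `π_θ = softmax β (f s)` and the measured softmax policy
`π̃_θ = softmax β (f̃ s)` are built from observable values differing by at most `ε`,
and the expected KL divergence between the expert policy `π_E` and `π̃_θ` is at most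
`δ`, then the expected total variation distance between `π_θ` and `π_E` is at most
`sinh (2βε) + √2 · √δ`. -/
theorem expected_tvDist_softmax_expert_bound {S A : Type*} [Fintype S] [Fintype A]
    [Nonempty S] [Nonempty A]
    (d : S → ℝ) (hd0 : ∀ s : S, 0 ≤ d s) (hd1 : ∑ s : S, d s = 1)
    (β ε δ : ℝ) (hβ : 0 < β) (hε : 0 ≤ ε) (hδ : 0 ≤ δ)
    (f ftilde : S → A → ℝ) (hf : ∀ (s : S) (a : A), |f s a - ftilde s a| ≤ ε)
    (πE : S → A → ℝ)
    (hE0 : ∀ (s : S) (a : A), 0 ≤ πE s a) (hE1 : ∀ s : S, ∑ a : A, πE s a = 1)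
    (hKL : ∑ s : S, d s * klDiv (πE s) (softmax β (ftilde s)) ≤ δ) :
    ∑ s : S, d s * tvDist (softmax β (f s)) (πE s) ≤
      Real.sinh (2 * β * ε) + Real.sqrt 2 * Real.sqrt δ := by
  -- per-state bound
  have hE1' : ∀ s : S, ∑ a : A, πE s a = 1 := hE1
  have hKL0 : ∀ s : S, 0 ≤ klDiv (πE s) (softmax β (ftilde s)) := fun s =>
    (tv_le_sqrt_klDiv (πE s) (softmax β (ftilde s)) (hE0 s) (hE1 s)
      (softmax_pos β (ftilde s)) (softmax_sum_one β (ftilde s))).2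
  have hpt : ∀ s : S, tvDist (softmax β (f s)) (πE s) ≤
      Real.sinh (2 * β * ε) + Real.sqrt (klDiv (πE s) (softmax β (ftilde s))) := by
    intro s
    have tri : tvDist (softmax β (f s)) (πE s) ≤
        tvDist (softmax β (f s)) (softmax β (ftilde s)) + tvDist (πE s) (softmax β (ftilde s)) := by
      rw [tvDist, tvDist, tvDist, ← mul_add, ← Finset.sum_add_distrib]
      refine mul_le_mul_of_nonneg_left (Finset.sum_le_sum fun a _ => ?_) (by norm_num)
      calc |softmax β (f s) a - πE s a|
          ≤ |softmax β (f s) a - softmax β (ftilde s) a| + |softmax β (ftilde s) a - πE s a| :=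
            abs_sub_le _ _ _
        _ = |softmax β (f s) a - softmax β (ftilde s) a| + |πE s a - softmax β (ftilde s) a| := by
            rw [abs_sub_comm (softmax β (ftilde s) a)]
    have h1 : tvDist (softmax β (f s)) (softmax β (ftilde s)) ≤ Real.sinh (2 * β * ε) :=
      tv_softmax_le_sinh β ε hβ hε (f s) (ftilde s) (hf s)
    have h2 : tvDist (πE s) (softmax β (ftilde s)) ≤
        Real.sqrt (klDiv (πE s) (softmax β (ftilde s))) :=
      (tv_le_sqrt_klDiv (πE s) (softmax β (ftilde s)) (hE0 s) (hE1 s)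
        (softmax_pos β (ftilde s)) (softmax_sum_one β (ftilde s))).1
    linarith
  -- Jensen / Cauchy-Schwarz step
  have hJ : ∑ s : S, d s * Real.sqrt (klDiv (πE s) (softmax β (ftilde s))) ≤ Real.sqrt δ := by
    have hcs := Finset.sum_sq_le_sum_mul_sum_of_sq_eq_mul Finset.univ
      (r := fun s : S => d s * Real.sqrt (klDiv (πE s) (softmax β (ftilde s))))
      (f := d) (g := fun s : S => d s * klDiv (πE s) (softmax β (ftilde s)))
      (fun s _ => hd0 s) (fun s _ => mul_nonneg (hd0 s) (hKL0 s))
      (fun s _ => by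
        rw [mul_pow, Real.sq_sqrt (hKL0 s)]; ring)
    rw [hd1, one_mul] at hcs
    have hr0 : 0 ≤ ∑ s : S, d s * Real.sqrt (klDiv (πE s) (softmax β (ftilde s))) :=
      Finset.sum_nonneg fun s _ => mul_nonneg (hd0 s) (Real.sqrt_nonneg _)
    have : (∑ s : S, d s * Real.sqrt (klDiv (πE s) (softmax β (ftilde s)))) ^ 2 ≤ δ :=
      le_trans hcs hKL
    calc ∑ s : S, d s * Real.sqrt (klDiv (πE s) (softmax β (ftilde s)))
        = Real.sqrt ((∑ s : S, d s * Real.sqrt (klDiv (πE s) (softmax β (ftilde s)))) ^ 2) :=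
          (Real.sqrt_sq hr0).symm
      _ ≤ Real.sqrt δ := Real.sqrt_le_sqrt this
  have hsqrt2 : Real.sqrt δ ≤ Real.sqrt 2 * Real.sqrt δ := by
    have h1 : (1:ℝ) ≤ Real.sqrt 2 := by
      rw [show (1:ℝ) = Real.sqrt 1 from Real.sqrt_one.symm]
      exact Real.sqrt_le_sqrt (by norm_num)
    nlinarith [Real.sqrt_nonneg δ]
  calc ∑ s : S, d s * tvDist (softmax β (f s)) (πE s)
      ≤ ∑ s : S, d s * (Real.sinh (2 * β * ε) +
          Real.sqrt (klDiv (πE s) (softmax β (ftilde s)))) :=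
        Finset.sum_le_sum fun s _ => mul_le_mul_of_nonneg_left (hpt s) (hd0 s)
    _ = Real.sinh (2 * β * ε) * (∑ s : S, d s) +
          ∑ s : S, d s * Real.sqrt (klDiv (πE s) (softmax β (ftilde s))) := by
        rw [Finset.mul_sum, ← Finset.sum_add_distrib]
        exact Finset.sum_congr rfl fun s _ => by ring
    _ ≤ Real.sinh (2 * β * ε) + Real.sqrt 2 * Real.sqrt δ := by
        rw [hd1, mul_one]
        linarith
end

section
/- Let S and A be finite nonempty sets, let γ ∈ [0,1), let T : S × A → PMF(S) be a transition kernel, let ρ₀ be a probability distribution on S, let r : S × A → ℝ be a reward function with |r(s,a)| ≤ R_MAX for all (s,a), and let π and π_E be stationary policies. Let J(π) = E[Σ_{t=0}^{∞} γ^t r(s_t, a_t)] be the expected discounted return under π, and let ρ_π, ρ_{π_E} be the discounted state–action occupancy measures of π and π_E. Then |J(π_E) − J(π)| ≤ (2 R_MAX / (1−γ)) · D_TV(ρ_π, ρ_{π_E}). -/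
/-- `stateDist T π ρ₀ t s` is the probability `P(s_t = s | π)` that the Markov chain
induced by the policy `π` in the MDP with transition kernel `T` and initial state
distribution `ρ₀` is in state `s` at time `t`. -/
noncomputable def stateDist {S A : Type*} [Fintype S] [Fintype A]
    (T : S → A → PMF S) (π : S → PMF A) (ρ₀ : PMF S) : ℕ → S → ℝ
  | 0, s => (ρ₀ s).toReal
  | t + 1, s' =>
      ∑ s : S, ∑ a : A, stateDist T π ρ₀ t s * ((π s) a).toReal * ((T s a) s').toReal

/-- The discounted state–action occupancy measure
`ρ_π(s,a) = (1−γ) Σ_t γ^t P(s_t = s, a_t = a | π)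
          = (1−γ) Σ_t γ^t P(s_t = s | π) π(a|s)`. -/
noncomputable def saOcc {S A : Type*} [Fintype S] [Fintype A]
    (T : S → A → PMF S) (π : S → PMF A) (ρ₀ : PMF S) (γ : ℝ) (sa : S × A) : ℝ :=
  (1 - γ) * ∑' t : ℕ, γ ^ t * stateDist T π ρ₀ t sa.1 * ((π sa.1) sa.2).toReal

/-- The expected discounted return `J(π) = E[Σ_t γ^t r(s_t, a_t)]`. -/
noncomputable def expReturn {S A : Type*} [Fintype S] [Fintype A]
    (T : S → A → PMF S) (π : S → PMF A) (ρ₀ : PMF S) (γ : ℝ) (r : S → A → ℝ) : ℝ :=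
  ∑' t : ℕ, γ ^ t * ∑ s : S, ∑ a : A, stateDist T π ρ₀ t s * ((π s) a).toReal * r s a

lemma pmf_sum_toReal {α : Type*} [Fintype α] (p : PMF α) :
    ∑ a : α, (p a).toReal = 1 := by
  rw [← ENNReal.toReal_sum (fun a _ => p.apply_ne_top a)]
  rw [← tsum_fintype (L := SummationFilter.unconditional _), p.tsum_coe, ENNReal.toReal_one]

section Aux
variable {S A : Type*} [Fintype S] [Fintype A]
  (T : S → A → PMF S) (π : S → PMF A) (ρ₀ : PMF S)

lemma stateDist_nonneg (t : ℕ) (s : S) : 0 ≤ stateDist T π ρ₀ t s := by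
  induction t generalizing s with
  | zero => exact ENNReal.toReal_nonneg
  | succ t ih =>
    show (0:ℝ) ≤ ∑ s : S, ∑ a : A, _
    apply Finset.sum_nonneg; intro s' _
    apply Finset.sum_nonneg; intro a _
    have := ih s'
    positivity

lemma stateDist_sum (t : ℕ) : ∑ s : S, stateDist T π ρ₀ t s = 1 := by
  induction t with
  | zero => exact pmf_sum_toReal ρ₀
  | succ t ih =>
    show ∑ s' : S, ∑ s : S, ∑ a : A,
        stateDist T π ρ₀ t s * ((π s) a).toReal * ((T s a) s').toReal = 1
    rw [Finset.sum_comm]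
    have h : ∀ s : S, ∑ s' : S, ∑ a : A,
        stateDist T π ρ₀ t s * ((π s) a).toReal * ((T s a) s').toReal
        = stateDist T π ρ₀ t s := by
      intro s
      rw [Finset.sum_comm]
      have h2 : ∀ a : A, ∑ s' : S,
          stateDist T π ρ₀ t s * ((π s) a).toReal * ((T s a) s').toReal
          = stateDist T π ρ₀ t s * ((π s) a).toReal := by
        intro a
        rw [← Finset.mul_sum, pmf_sum_toReal, mul_one]
      rw [Finset.sum_congr rfl (fun a _ => h2 a), ← Finset.mul_sum,
        pmf_sum_toReal, mul_one]
    rw [Finset.sum_congr rfl (fun s _ => h s), ih]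

lemma stateDist_le_one (t : ℕ) (s : S) : stateDist T π ρ₀ t s ≤ 1 := by
  rw [← stateDist_sum T π ρ₀ t]
  exact Finset.single_le_sum (fun s _ => stateDist_nonneg T π ρ₀ t s) (Finset.mem_univ s)

lemma summable_geo_mul {γ : ℝ} (hγ0 : 0 ≤ γ) (hγ1 : γ < 1)
    (f : ℕ → ℝ) (hf0 : ∀ t, 0 ≤ f t) (hf1 : ∀ t, f t ≤ 1) (c : ℝ) :
    Summable (fun t => γ ^ t * f t * c) := by
  have hg : Summable (fun t : ℕ => |c| * γ ^ t) :=
    (summable_geometric_of_lt_one hγ0 hγ1).mul_left _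
  refine Summable.of_abs (Summable.of_nonneg_of_le (fun t => abs_nonneg _)
    (fun t => ?_) hg)
  rw [abs_mul, abs_mul, abs_of_nonneg (pow_nonneg hγ0 t), abs_of_nonneg (hf0 t)]
  have h1 : γ ^ t * f t ≤ γ ^ t := mul_le_of_le_one_right (pow_nonneg hγ0 t) (hf1 t)
  calc γ ^ t * f t * |c| ≤ γ ^ t * |c| :=
        mul_le_mul_of_nonneg_right h1 (abs_nonneg c)
    _ = |c| * γ ^ t := mul_comm _ _

lemma expReturn_mul_eq {γ : ℝ} (hγ0 : 0 ≤ γ) (hγ1 : γ < 1) (r : S → A → ℝ) :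
    (1 - γ) * expReturn T π ρ₀ γ r
      = ∑ sa : S × A, saOcc T π ρ₀ γ sa * r sa.1 sa.2 := by
  have hsum : ∀ sa : S × A, Summable (fun t =>
      γ ^ t * stateDist T π ρ₀ t sa.1 * (((π sa.1) sa.2).toReal * r sa.1 sa.2)) :=
    fun sa => summable_geo_mul hγ0 hγ1 _ (stateDist_nonneg T π ρ₀ · sa.1)
      (stateDist_le_one T π ρ₀ · sa.1) _
  calc (1 - γ) * expReturn T π ρ₀ γ r
      = (1 - γ) * ∑' t : ℕ, ∑ sa : S × A,
          γ ^ t * stateDist T π ρ₀ t sa.1 * (((π sa.1) sa.2).toReal * r sa.1 sa.2) := by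
        unfold expReturn
        congr 1
        refine tsum_congr fun t => ?_
        rw [Fintype.sum_prod_type, Finset.mul_sum]
        refine Finset.sum_congr rfl fun s _ => ?_
        rw [Finset.mul_sum]
        exact Finset.sum_congr rfl fun a _ => by ring
    _ = (1 - γ) * ∑ sa : S × A, ∑' t : ℕ,
          γ ^ t * stateDist T π ρ₀ t sa.1 * (((π sa.1) sa.2).toReal * r sa.1 sa.2) := by
        rw [Summable.tsum_finsetSum (fun sa _ => hsum sa)]
    _ = ∑ sa : S × A, saOcc T π ρ₀ γ sa * r sa.1 sa.2 := by
        rw [Finset.mul_sum]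
        refine Finset.sum_congr rfl fun sa _ => ?_
        unfold saOcc
        rw [mul_assoc]
        congr 1
        rw [← tsum_mul_right]
        exact tsum_congr fun t => by ring

end Aux

/-- The gap between the expected discounted returns of two policies is bounded by
`2 R_MAX/(1−γ)` times the total variation distance between their discounted
state–action occupancy measures. -/
theorem return_gap_le_tvDist_saOcc {S A : Type*} [Fintype S] [Fintype A]
    [Nonempty S] [Nonempty A]
    (γ : ℝ) (hγ0 : 0 ≤ γ) (hγ1 : γ < 1)
    (T : S → A → PMF S) (ρ₀ : PMF S)
    (r : S → A → ℝ) (Rmax : ℝ) (hr : ∀ (s : S) (a : A), |r s a| ≤ Rmax)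
    (π πE : S → PMF A) :
    |expReturn T πE ρ₀ γ r - expReturn T π ρ₀ γ r| ≤
      (2 * Rmax / (1 - γ)) * tvDist (saOcc T π ρ₀ γ) (saOcc T πE ρ₀ γ) := by
  have hγ : (0:ℝ) < 1 - γ := by linarith
  have hE := expReturn_mul_eq T πE ρ₀ hγ0 hγ1 r
  have hP := expReturn_mul_eq T π ρ₀ hγ0 hγ1 r
  have key : (1 - γ) * (expReturn T πE ρ₀ γ r - expReturn T π ρ₀ γ r)
      = ∑ sa : S × A, (saOcc T πE ρ₀ γ sa - saOcc T π ρ₀ γ sa) * r sa.1 sa.2 := by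
    rw [mul_sub, hE, hP, ← Finset.sum_sub_distrib]
    exact Finset.sum_congr rfl fun sa _ => by ring
  have habs : (1 - γ) * |expReturn T πE ρ₀ γ r - expReturn T π ρ₀ γ r|
      ≤ Rmax * ∑ sa : S × A, |saOcc T π ρ₀ γ sa - saOcc T πE ρ₀ γ sa| := by
    rw [← abs_of_pos hγ, ← abs_mul, key]
    calc |∑ sa : S × A, (saOcc T πE ρ₀ γ sa - saOcc T π ρ₀ γ sa) * r sa.1 sa.2|
        ≤ ∑ sa : S × A, |(saOcc T πE ρ₀ γ sa - saOcc T π ρ₀ γ sa) * r sa.1 sa.2| :=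
          Finset.abs_sum_le_sum_abs _ _
      _ ≤ ∑ sa : S × A, |saOcc T π ρ₀ γ sa - saOcc T πE ρ₀ γ sa| * Rmax := by
          refine Finset.sum_le_sum fun sa _ => ?_
          rw [abs_mul, abs_sub_comm]
          exact mul_le_mul_of_nonneg_left (hr _ _) (abs_nonneg _)
      _ = Rmax * ∑ sa : S × A, |saOcc T π ρ₀ γ sa - saOcc T πE ρ₀ γ sa| := by
          rw [Finset.mul_sum]; exact Finset.sum_congr rfl fun sa _ => by ring
  have hR : 0 ≤ Rmax := le_trans (abs_nonneg _) (hr (Classical.arbitrary S) (Classical.arbitrary A))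
  unfold tvDist
  rw [div_mul_eq_mul_div, ← mul_assoc]
  rw [le_div_iff₀ hγ]
  calc |expReturn T πE ρ₀ γ r - expReturn T π ρ₀ γ r| * (1 - γ)
      = (1 - γ) * |expReturn T πE ρ₀ γ r - expReturn T π ρ₀ γ r| := by ring
    _ ≤ Rmax * ∑ sa : S × A, |saOcc T π ρ₀ γ sa - saOcc T πE ρ₀ γ sa| := habs
    _ = 2 * Rmax * (1 / 2) * ∑ sa : S × A, |saOcc T π ρ₀ γ sa - saOcc T πE ρ₀ γ sa| := by
        ring
end
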